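/- Let A ∈ {ℤ, ℝ} and let K, X ⊆ ℝ^d be d-dimensional convex bodies (convex bodies whose affine hull is all of ℝ^d). If the lattice width of K equals the generalised flatness constant Flt_d^A(X), then K contains an A-unimodular copy of X. -/

import Mathlib

open Set Pointwise

noncomputable section

/-- The set of real numbers that are integers (the ring ℤ viewed inside ℝ). -/
def ZSet : Set ℝ := Set.range (fun z : ℤ => (z : ℝ))

/-- `T : ℝ^d → ℝ^d` is an affine `A`-unimodular transformation: `T x = M x + b` with
`M` an integer matrix of determinant `±1` and `b ∈ A^d`. -/
def IsUnimodularMap {d : ℕ} (A : Set ℝ) (T : (Fin d → ℝ) → (Fin d → ℝ)) : Prop :=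
  ∃ (M : Matrix (Fin d) (Fin d) ℤ) (b : Fin d → ℝ),
    (M.det = 1 ∨ M.det = -1) ∧ (∀ i, b i ∈ A) ∧
    ∀ x, T x = (M.map (fun z : ℤ => (z : ℝ))).mulVec x + b

/-- `Y` is an `A`-unimodular copy of `X`. -/
def IsUnimodCopy {d : ℕ} (A : Set ℝ) (X Y : Set (Fin d → ℝ)) : Prop :=
  ∃ T, IsUnimodularMap A T ∧ Y = T '' X

/-- `K` contains an `A`-unimodular copy of `X`. -/
def ContainsCopy {d : ℕ} (A : Set ℝ) (X K : Set (Fin d → ℝ)) : Prop :=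
  ∃ Y, IsUnimodCopy A X Y ∧ Y ⊆ K

/-- `K` is `A`-`X`-free: its relative interior contains no `A`-unimodular copy of `X`. -/
def IsFree {d : ℕ} (A : Set ℝ) (X K : Set (Fin d → ℝ)) : Prop :=
  ∀ Y, IsUnimodCopy A X Y → ¬ Y ⊆ intrinsicInterior ℝ K

/-- A convex body: a nonempty compact convex set. -/
def IsConvexBody {d : ℕ} (K : Set (Fin d → ℝ)) : Prop :=
  Convex ℝ K ∧ IsCompact K ∧ K.Nonempty

/-- A polytope: the convex hull of a finite set of points. -/
def IsPolytope {d : ℕ} (K : Set (Fin d → ℝ)) : Prop :=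
  ∃ F : Set (Fin d → ℝ), F.Finite ∧ K = convexHull ℝ F

/-- The width of `K` along the integer linear functional `u`. -/
def widthAlong {d : ℕ} (u : Fin d → ℤ) (K : Set (Fin d → ℝ)) : ℝ :=
  sSup {w | ∃ x ∈ K, ∃ y ∈ K, w = |(∑ i, (u i : ℝ) * x i) - ∑ i, (u i : ℝ) * y i|}

/-- The lattice width of `K`: the infimum of its widths along nonzero integer functionals. -/
def latticeWidth {d : ℕ} (K : Set (Fin d → ℝ)) : ℝ :=
  sInf {w | ∃ u : Fin d → ℤ, u ≠ 0 ∧ w = widthAlong u K}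

/-- The generalised flatness constant `Flt_d^A(X)`: the supremum of the lattice widths of all
convex bodies containing no `A`-unimodular copy of `X`. -/
def Flt (d : ℕ) (A : Set ℝ) (X : Set (Fin d → ℝ)) : ℝ :=
  sSup {w | ∃ K : Set (Fin d → ℝ), IsConvexBody K ∧ ¬ ContainsCopy A X K ∧ w = latticeWidth K}

/-- The affine dimension of a set: the dimension of the direction of its affine span. -/
def affDim {d : ℕ} (s : Set (Fin d → ℝ)) : ℕ :=
  Module.finrank ℝ (affineSpan ℝ s).direction

/-- Minkowski difference `K ÷ S = {x | S + x ⊆ K}`. -/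
def mDiff {d : ℕ} (K S : Set (Fin d → ℝ)) : Set (Fin d → ℝ) :=
  {x | ∀ s ∈ S, s + x ∈ K}

/-- The standard triangle `Δ₂ = conv{(0,0), (1,0), (0,1)} ⊆ ℝ²`. -/
def stdSimplex2 : Set (Fin 2 → ℝ) := convexHull ℝ {![0, 0], ![1, 0], ![0, 1]}

namespace FltAux

variable {d : ℕ}

/-- dilation about `c` with factor `t`. -/
def dil (c : Fin d → ℝ) (t : ℝ) (z : Fin d → ℝ) : Fin d → ℝ := c + t • (z - c)

lemma lfun_dil (u : Fin d → ℤ) (c : Fin d → ℝ) (t : ℝ) (z : Fin d → ℝ) :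
    (∑ i, (u i : ℝ) * (dil c t z) i)
      = (∑ i, (u i : ℝ) * c i) + t * ((∑ i, (u i : ℝ) * z i) - ∑ i, (u i : ℝ) * c i) := by
  simp only [dil, Pi.add_apply, Pi.smul_apply, Pi.sub_apply, smul_eq_mul, mul_add, mul_sub,
    Finset.sum_add_distrib, Finset.mul_sum, Finset.sum_sub_distrib]
  congr 1
  congr 1 <;> exact Finset.sum_congr rfl fun i _ => by ring

lemma dil_continuous (c : Fin d → ℝ) (t : ℝ) : Continuous (dil c t) := by
  unfold dil; fun_prop

lemma dil_image_subset {K : Set (Fin d → ℝ)} (hconv : Convex ℝ K) {c : Fin d → ℝ} (hc : c ∈ K)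
    {s t : ℝ} (hs : 0 ≤ s) (hst : s ≤ t) (ht : 0 < t) :
    dil c s '' K ⊆ dil c t '' K := by
  rintro _ ⟨y, hy, rfl⟩
  refine ⟨c + (s / t) • (y - c), ?_, ?_⟩
  · have h1 : 0 ≤ s / t := div_nonneg hs ht.le
    have h2 : s / t ≤ 1 := (div_le_one ht).2 hst
    have := hconv hc hy (by linarith : (0:ℝ) ≤ 1 - s / t) h1 (by ring)
    convert this using 1
    module
  · show dil c t (c + (s / t) • (y - c)) = dil c s y
    unfold dil
    have hts : t * (s / t) = s := by field_simp
    rw [add_sub_cancel_left, smul_smul, hts]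

lemma subset_dil_image {K : Set (Fin d → ℝ)} (hconv : Convex ℝ K) {c : Fin d → ℝ} (hc : c ∈ K)
    {t : ℝ} (ht : 1 ≤ t) :
    K ⊆ dil c t '' K := by
  have h := dil_image_subset hconv hc (zero_le_one) ht (by linarith)
  have h1 : dil c 1 '' K = K := by
    have : dil c (1:ℝ) = id := by funext z; unfold dil; simp
    rw [this, Set.image_id]
  rwa [h1] at h


lemma iInter_dil_subset {K : Set (Fin d → ℝ)} (hcl : IsClosed K) (c : Fin d → ℝ) :
    (⋂ n : ℕ, dil c (1 + 1/(n+1)) '' K) ⊆ K := by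
  intro z hz
  have hmem : ∀ n : ℕ, c + (1 + 1/(n+1) : ℝ)⁻¹ • (z - c) ∈ K := by
    intro n
    have hz' := Set.mem_iInter.1 hz n
    obtain ⟨y, hy, hyz⟩ := hz'
    have htn : (0:ℝ) < 1 + 1/(n+1) := by positivity
    have : y = c + (1 + 1/(n+1) : ℝ)⁻¹ • (z - c) := by
      have : z - c = (1 + 1/(n+1) : ℝ) • (y - c) := by
        rw [← hyz]; unfold dil; rw [add_sub_cancel_left]
      rw [this, smul_smul, inv_mul_cancel₀ htn.ne', one_smul]
      abel
    rwa [← this]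
  have htend : Filter.Tendsto (fun n : ℕ => c + (1 + 1/(n+1) : ℝ)⁻¹ • (z - c))
      Filter.atTop (nhds z) := by
    have h1 : Filter.Tendsto (fun n : ℕ => (1 + 1/(n+1) : ℝ)) Filter.atTop (nhds 1) := by
      have := tendsto_one_div_add_atTop_nhds_zero_nat (𝕜 := ℝ)
      have h2 := this.const_add (1:ℝ)
      simpa using h2
    have h3 : Filter.Tendsto (fun n : ℕ => (1 + 1/(n+1) : ℝ)⁻¹) Filter.atTop (nhds 1) := by
      simpa using h1.inv₀ (by norm_num)
    have h4 := ((h3.smul_const (z - c)).const_add c)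
    simpa using h4
  exact hcl.mem_of_tendsto htend (Filter.Eventually.of_forall hmem)

lemma widthSet_bddAbove (u : Fin d → ℤ) {K : Set (Fin d → ℝ)} (hK : IsCompact K) :
    BddAbove {w | ∃ x ∈ K, ∃ y ∈ K, w = |(∑ i, (u i : ℝ) * x i) - ∑ i, (u i : ℝ) * y i|} := by
  obtain ⟨R, hR⟩ := (Metric.isBounded_iff_subset_closedBall 0).1 hK.isBounded
  refine ⟨∑ i, |(u i : ℝ)| * (2 * R), ?_⟩
  rintro w ⟨x, hx, y, hy, rfl⟩
  have hbx : ∀ v ∈ K, ∀ i, |v i| ≤ R := by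
    intro v hv i
    have := hR hv
    rw [Metric.mem_closedBall, dist_zero_right] at this
    calc |v i| = ‖v i‖ := rfl
      _ ≤ ‖v‖ := norm_le_pi_norm v i
      _ ≤ R := this
  calc |(∑ i, (u i : ℝ) * x i) - ∑ i, (u i : ℝ) * y i|
      = |∑ i, ((u i : ℝ) * x i - (u i : ℝ) * y i)| := by rw [Finset.sum_sub_distrib]
    _ ≤ ∑ i, |(u i : ℝ) * x i - (u i : ℝ) * y i| := Finset.abs_sum_le_sum_abs _ _
    _ ≤ ∑ i, |(u i : ℝ)| * (2 * R) := by
        refine Finset.sum_le_sum fun i _ => ?_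
        rw [← mul_sub, abs_mul]
        refine mul_le_mul_of_nonneg_left ?_ (abs_nonneg _)
        calc |x i - y i| ≤ |x i| + |y i| := abs_sub _ _
          _ ≤ R + R := add_le_add (hbx x hx i) (hbx y hy i)
          _ = 2 * R := by ring

lemma widthSet_nonempty (u : Fin d → ℤ) {K : Set (Fin d → ℝ)} (hK : K.Nonempty) :
    {w | ∃ x ∈ K, ∃ y ∈ K, w = |(∑ i, (u i : ℝ) * x i) - ∑ i, (u i : ℝ) * y i|}.Nonempty := by
  obtain ⟨x, hx⟩ := hK
  exact ⟨0, x, hx, x, hx, by simp⟩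


lemma latticeWidth_pos (hd : 0 < d) {K : Set (Fin d → ℝ)}
    (hconv : Convex ℝ K) (hcmp : IsCompact K) (hfull : affineSpan ℝ K = ⊤) :
    0 < latticeWidth K := by
  have hint : (interior K).Nonempty := hconv.interior_nonempty_iff_affineSpan_eq_top.mpr hfull
  obtain ⟨c, hc⟩ := hint
  obtain ⟨ε, hε, hball⟩ := Metric.isOpen_iff.1 isOpen_interior c hc
  have hballK : Metric.ball c ε ⊆ K := hball.trans interior_subset
  have hcK : c ∈ K := interior_subset hc
  have key : ∀ w ∈ {w | ∃ u : Fin d → ℤ, u ≠ 0 ∧ w = widthAlong u K}, ε / 2 ≤ w := by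
    rintro w ⟨u, hu, rfl⟩
    obtain ⟨i, hi⟩ := Function.ne_iff.1 hu
    set x : Fin d → ℝ := c + (ε / 2) • (Pi.single i 1 : Fin d → ℝ) with hxdef
    have hxK : x ∈ K := by
      apply hballK
      rw [Metric.mem_ball, dist_eq_norm]
      have : x - c = (ε / 2) • (Pi.single i 1 : Fin d → ℝ) := by rw [hxdef]; abel
      rw [this, norm_smul]
      have h1 : ‖(Pi.single i 1 : Fin d → ℝ)‖ ≤ 1 := by
        rw [pi_norm_le_iff_of_nonneg zero_le_one]
        intro j
        rcases eq_or_ne j i with rfl | hji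
        · simp
        · simp [Pi.single_eq_of_ne hji]
      calc ‖(ε/2 : ℝ)‖ * ‖(Pi.single i 1 : Fin d → ℝ)‖ ≤ |ε/2| * 1 := by
            exact mul_le_mul_of_nonneg_left h1 (abs_nonneg _)
        _ = ε / 2 := by rw [mul_one, abs_of_pos (by linarith)]
        _ < ε := by linarith
    have hval : (∑ j, (u j : ℝ) * x j) - ∑ j, (u j : ℝ) * c j = (ε / 2) * (u i : ℝ) := by
      have : ∀ j, (u j : ℝ) * x j = (u j : ℝ) * c j + (u j : ℝ) * ((ε/2) * (Pi.single i 1 : Fin d → ℝ) j) := by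
        intro j; rw [hxdef]; simp [Pi.add_apply]; ring
      simp only [this, Finset.sum_add_distrib]
      rw [add_sub_cancel_left]
      rw [Finset.sum_eq_single i]
      · simp; ring
      · intro j _ hji; simp [Pi.single_eq_of_ne hji]
      · intro h; exact absurd (Finset.mem_univ i) h
    have hmem : (ε / 2) * |(u i : ℝ)| ∈
        {w | ∃ x ∈ K, ∃ y ∈ K, w = |(∑ j, (u j : ℝ) * x j) - ∑ j, (u j : ℝ) * y j|} := by
      refine ⟨x, hxK, c, hcK, ?_⟩
      rw [hval, abs_mul, abs_of_pos (by linarith : (0:ℝ) < ε/2)]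
    have h1 : (1:ℝ) ≤ |(u i : ℝ)| := by
      have : (1:ℤ) ≤ |u i| := Int.one_le_abs hi
      calc (1:ℝ) = ((1:ℤ):ℝ) := by norm_num
        _ ≤ ((|u i| : ℤ) : ℝ) := by exact_mod_cast this
        _ = |(u i : ℝ)| := by push_cast; ring
    calc ε / 2 = (ε/2) * 1 := by ring
      _ ≤ (ε/2) * |(u i : ℝ)| := by nlinarith
      _ ≤ widthAlong u K := le_csSup (widthSet_bddAbove u hcmp) hmem
  have hne : {w | ∃ u : Fin d → ℤ, u ≠ 0 ∧ w = widthAlong u K}.Nonempty := by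
    refine ⟨widthAlong (Pi.single ⟨0, hd⟩ 1) K, Pi.single ⟨0, hd⟩ 1, ?_, rfl⟩
    intro h
    have := congrFun h ⟨0, hd⟩
    simp at this
  have := le_csInf hne key
  calc (0:ℝ) < ε / 2 := by linarith
    _ ≤ latticeWidth K := this


lemma widthAlong_dil (u : Fin d → ℤ) (c : Fin d → ℝ) {t : ℝ} (ht : 0 ≤ t)
    (K : Set (Fin d → ℝ)) :
    widthAlong u (dil c t '' K) = t * widthAlong u K := by
  have himg : {w | ∃ x ∈ dil c t '' K, ∃ y ∈ dil c t '' K,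
        w = |(∑ i, (u i : ℝ) * x i) - ∑ i, (u i : ℝ) * y i|}
      = t • {w | ∃ x ∈ K, ∃ y ∈ K, w = |(∑ i, (u i : ℝ) * x i) - ∑ i, (u i : ℝ) * y i|} := by
    ext w
    constructor
    · rintro ⟨_, ⟨x, hx, rfl⟩, _, ⟨y, hy, rfl⟩, rfl⟩
      refine Set.mem_smul_set.2 ⟨|(∑ i, (u i : ℝ) * x i) - ∑ i, (u i : ℝ) * y i|,
        ⟨x, hx, y, hy, rfl⟩, ?_⟩
      have hkey : (∑ i, (u i : ℝ) * (dil c t x) i) - ∑ i, (u i : ℝ) * (dil c t y) i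
          = t * ((∑ i, (u i : ℝ) * x i) - ∑ i, (u i : ℝ) * y i) := by
        rw [lfun_dil, lfun_dil]; ring
      rw [smul_eq_mul, hkey, abs_mul, abs_of_nonneg ht]
    · rintro hw
      obtain ⟨a, ⟨x, hx, y, hy, rfl⟩, rfl⟩ := Set.mem_smul_set.1 hw
      refine ⟨dil c t x, ⟨x, hx, rfl⟩, dil c t y, ⟨y, hy, rfl⟩, ?_⟩
      have hkey : (∑ i, (u i : ℝ) * (dil c t x) i) - ∑ i, (u i : ℝ) * (dil c t y) i
          = t * ((∑ i, (u i : ℝ) * x i) - ∑ i, (u i : ℝ) * y i) := by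
        rw [lfun_dil, lfun_dil]; ring
      rw [smul_eq_mul, hkey, abs_mul, abs_of_nonneg ht]
  rw [widthAlong, himg, Real.sSup_smul_of_nonneg ht, smul_eq_mul, widthAlong]

lemma latticeWidth_dil (c : Fin d → ℝ) {t : ℝ} (ht : 0 ≤ t) (K : Set (Fin d → ℝ)) :
    latticeWidth (dil c t '' K) = t * latticeWidth K := by
  have himg : {w | ∃ u : Fin d → ℤ, u ≠ 0 ∧ w = widthAlong u (dil c t '' K)}
      = t • {w | ∃ u : Fin d → ℤ, u ≠ 0 ∧ w = widthAlong u K} := by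
    ext w
    constructor
    · rintro ⟨u, hu, rfl⟩
      exact Set.mem_smul_set.2 ⟨widthAlong u K, ⟨u, hu, rfl⟩,
        by rw [smul_eq_mul, widthAlong_dil u c ht]⟩
    · rintro hw
      obtain ⟨a, ⟨u, hu, rfl⟩, rfl⟩ := Set.mem_smul_set.1 hw
      exact ⟨u, hu, by rw [smul_eq_mul, widthAlong_dil u c ht]⟩
  rw [latticeWidth, himg, Real.sInf_smul_of_nonneg ht, smul_eq_mul, latticeWidth]

lemma dil_image_convexBody {K : Set (Fin d → ℝ)} (hconv : Convex ℝ K) (hcmp : IsCompact K)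
    (hne : K.Nonempty) (c : Fin d → ℝ) (t : ℝ) :
    Convex ℝ (dil c t '' K) ∧ IsCompact (dil c t '' K) ∧ (dil c t '' K).Nonempty := by
  refine ⟨?_, hcmp.image (dil_continuous c t), hne.image _⟩
  have : dil c t = (fun z => (c - t • c) + z) ∘ (fun z => t • z) := by
    funext z; simp [dil, Function.comp]; module
  rw [this, Set.image_comp]
  exact (hconv.smul t).translate _


lemma mem_ball_single {δ : ℝ} (hδ : 0 < δ) (p : Fin d → ℝ) (i : Fin d) :
    p + (δ / 2) • (Pi.single i 1 : Fin d → ℝ) ∈ Metric.ball p δ := by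
  rw [Metric.mem_ball, dist_eq_norm, add_sub_cancel_left, norm_smul]
  have h1 : ‖(Pi.single i 1 : Fin d → ℝ)‖ ≤ 1 := by
    rw [pi_norm_le_iff_of_nonneg zero_le_one]
    intro j
    rcases eq_or_ne j i with rfl | hji
    · simp
    · simp [Pi.single_eq_of_ne hji]
  calc ‖(δ/2 : ℝ)‖ * ‖(Pi.single i 1 : Fin d → ℝ)‖ ≤ |δ/2| * 1 :=
        mul_le_mul_of_nonneg_left h1 (abs_nonneg _)
    _ = δ / 2 := by rw [mul_one, abs_of_pos (by linarith)]
    _ < δ := by linarith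

lemma exists_free_dil (A : Set ℝ) (hAcl : IsClosed A)
    {K X : Set (Fin d → ℝ)} (hKconv : Convex ℝ K) (hKcmp : IsCompact K)
    (hXconv : Convex ℝ X) (hXfull : affineSpan ℝ X = ⊤)
    {c : Fin d → ℝ} (hc : c ∈ K)
    (hfree : ¬ ContainsCopy A X K) :
    ∃ t : ℝ, 1 < t ∧ ¬ ContainsCopy A X (dil c t '' K) := by
  by_contra hcon
  push_neg at hcon
  set Kn : ℕ → Set (Fin d → ℝ) := fun n => dil c (1 + 1/(n+1)) '' K with hKn
  have htpos : ∀ n : ℕ, (1:ℝ) < 1 + 1/(n+1) := by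
    intro n
    have : (0:ℝ) < 1/(n+1) := by positivity
    linarith
  have hcopy : ∀ n : ℕ, ∃ (M : Matrix (Fin d) (Fin d) ℤ) (b : Fin d → ℝ),
      (M.det = 1 ∨ M.det = -1) ∧ (∀ i, b i ∈ A) ∧
      ∀ x ∈ X, (M.map (fun z : ℤ => (z : ℝ))).mulVec x + b ∈ Kn n := by
    intro n
    obtain ⟨Y, ⟨T, ⟨M, b, hdet, hbA, hT⟩, rfl⟩, hYK⟩ := hcon _ (htpos n)
    exact ⟨M, b, hdet, hbA, fun x hx => by rw [← hT x]; exact hYK ⟨x, hx, rfl⟩⟩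
  choose M b hdet hbA hsub using hcopy
  have hKnmono : ∀ {m n : ℕ}, m ≤ n → Kn n ⊆ Kn m := by
    intro m n hmn
    apply dil_image_subset hKconv hc (by positivity)
    · have h1 : (1:ℝ)/(n+1) ≤ 1/(m+1) := by
        apply one_div_le_one_div_of_le (by positivity)
        exact_mod_cast by omega
      linarith
    · linarith [htpos m]
  have hKncl : ∀ n, IsClosed (Kn n) := fun n => (hKcmp.image (dil_continuous _ _)).isClosed
  have hbd : Bornology.IsBounded (Kn 0) := (hKcmp.image (dil_continuous _ _)).isBounded
  obtain ⟨R, hR⟩ := (Metric.isBounded_iff_subset_closedBall 0).1 hbd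
  have hKnR : ∀ n, Kn n ⊆ Metric.closedBall 0 R := fun n => (hKnmono (Nat.zero_le n)).trans hR
  -- interior point of X
  have hint : (interior X).Nonempty := hXconv.interior_nonempty_iff_affineSpan_eq_top.mpr hXfull
  obtain ⟨p, hp⟩ := hint
  obtain ⟨δ, hδ, hball⟩ := Metric.isOpen_iff.1 isOpen_interior p hp
  have hpX : p ∈ X := interior_subset hp
  have hballX : Metric.ball p δ ⊆ X := hball.trans interior_subset
  -- entry bound
  set C : ℤ := ⌈4 * R / δ⌉ with hC
  have hMbound : ∀ n, ∀ j i, (M n) j i ∈ Set.Icc (-C) C := by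
    intro n j i
    set x2 : Fin d → ℝ := p + (δ/2) • (Pi.single i 1 : Fin d → ℝ) with hx2
    have hx2X : x2 ∈ X := hballX (mem_ball_single hδ p i)
    have hv1 : ((M n).map (fun z : ℤ => (z : ℝ))).mulVec p + b n ∈ Metric.closedBall 0 R :=
      hKnR n (hsub n p hpX)
    have hv2 : ((M n).map (fun z : ℤ => (z : ℝ))).mulVec x2 + b n ∈ Metric.closedBall 0 R :=
      hKnR n (hsub n x2 hx2X)
    have hdiff : (((M n).map (fun z : ℤ => (z : ℝ))).mulVec x2 + b n)
        - (((M n).map (fun z : ℤ => (z : ℝ))).mulVec p + b n)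
        = (δ/2) • fun j' => (((M n) j' i : ℝ)) := by
      rw [hx2]
      rw [Matrix.mulVec_add, Matrix.mulVec_smul, Matrix.mulVec_single]
      simp [Matrix.map_apply]
      try abel
    have hnorm : ‖(δ/2) • (fun j' => (((M n) j' i : ℝ)))‖ ≤ 2 * R := by
      rw [← hdiff]
      rw [Metric.mem_closedBall, dist_zero_right] at hv1 hv2
      calc ‖_ - _‖ ≤ _ + _ := norm_sub_le _ _
        _ ≤ R + R := add_le_add hv2 hv1
        _ = 2 * R := by ring
    have hcoord : |(δ/2) * ((M n) j i : ℝ)| ≤ 2 * R := by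
      calc |(δ/2) * ((M n) j i : ℝ)| = ‖((δ/2) • (fun j' => (((M n) j' i : ℝ)))) j‖ := by
            simp [Pi.smul_apply, smul_eq_mul, Real.norm_eq_abs, abs_mul, abs_div]
        _ ≤ ‖(δ/2) • (fun j' => (((M n) j' i : ℝ)))‖ := norm_le_pi_norm _ j
        _ ≤ 2 * R := hnorm
    have habs : |((M n) j i : ℝ)| ≤ 4 * R / δ := by
      rw [abs_mul, abs_of_pos (by linarith : (0:ℝ) < δ/2)] at hcoord
      rw [le_div_iff₀ hδ]
      nlinarith
    have : |(M n) j i| ≤ C := by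
      have h1 : (|(M n) j i| : ℝ) ≤ (C : ℝ) := by
        push_cast
        calc |((M n) j i : ℝ)| ≤ 4 * R / δ := habs
          _ ≤ (⌈4 * R / δ⌉ : ℝ) := Int.le_ceil _
      exact_mod_cast h1
    rw [Set.mem_Icc]
    exact abs_le.1 this
  -- finiteness of the matrix set
  have hMfin : {M' : Matrix (Fin d) (Fin d) ℤ | ∀ j i, M' j i ∈ Set.Icc (-C) C}.Finite := by
    have hpi : (Set.univ.pi fun _ : Fin d =>
        (Set.univ.pi fun _ : Fin d => Set.Icc (-C) C)).Finite :=
      Set.Finite.pi fun _ => Set.Finite.pi fun _ => Set.finite_Icc _ _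
    apply (hpi.image Matrix.of).subset
    rintro M' hM'
    exact ⟨Matrix.of.symm M', fun j _ => fun i _ => hM' j i, rfl⟩
  -- infinite fiber
  have : Finite ↥{M' : Matrix (Fin d) (Fin d) ℤ | ∀ j i, M' j i ∈ Set.Icc (-C) C} :=
    hMfin.to_subtype
  obtain ⟨⟨M₀, hM₀⟩, hfib⟩ := Finite.exists_infinite_fiber
    (fun n : ℕ => (⟨M n, hMbound n⟩ : {M' : Matrix (Fin d) (Fin d) ℤ | ∀ j i, M' j i ∈ Set.Icc (-C) C}))
  have hNinf : {n : ℕ | M n = M₀}.Infinite := by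
    have heq : (fun n : ℕ => (⟨M n, hMbound n⟩ :
        {M' : Matrix (Fin d) (Fin d) ℤ | ∀ j i, M' j i ∈ Set.Icc (-C) C})) ⁻¹' {⟨M₀, hM₀⟩}
        = {n : ℕ | M n = M₀} := by
      ext n; simp [Subtype.ext_iff]
    rw [← heq, ← Set.infinite_coe_iff]
    exact hfib
  obtain ⟨n₀, hn₀⟩ := hNinf.nonempty
  have hdet₀ : M₀.det = 1 ∨ M₀.det = -1 := hn₀ ▸ hdet n₀
  set R' : ℝ := R + ‖(M₀.map (fun z : ℤ => (z : ℝ))).mulVec p‖ with hR'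
  set s : ℕ → Set (Fin d → ℝ) := fun m =>
    Metric.closedBall 0 R' ∩ ({β | ∀ i, β i ∈ A} ∩
      {β | ∀ x ∈ X, (M₀.map (fun z : ℤ => (z : ℝ))).mulVec x + β ∈ Kn m}) with hs
  have hscl : ∀ m, IsClosed (s m) := by
    intro m
    refine Metric.isClosed_closedBall.inter (IsClosed.inter ?_ ?_)
    · have : {β : Fin d → ℝ | ∀ i, β i ∈ A} = ⋂ i, (fun β : Fin d → ℝ => β i) ⁻¹' A := by
        ext β; simp
      rw [this]
      exact isClosed_iInter fun i => hAcl.preimage (continuous_apply i)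
    · have : {β : Fin d → ℝ | ∀ x ∈ X, (M₀.map (fun z : ℤ => (z : ℝ))).mulVec x + β ∈ Kn m}
          = ⋂ x ∈ X, (fun β : Fin d → ℝ => (M₀.map (fun z : ℤ => (z : ℝ))).mulVec x + β) ⁻¹' (Kn m) := by
        ext β; simp
      rw [this]
      exact isClosed_biInter fun x _ =>
        (hKncl m).preimage (continuous_const.add continuous_id)
  have hsmono : ∀ m, s (m+1) ⊆ s m := by
    intro m β ⟨h1, h2, h3⟩
    exact ⟨h1, h2, fun x hx => hKnmono (Nat.le_succ m) (h3 x hx)⟩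
  have hsne : ∀ m, (s m).Nonempty := by
    intro m
    obtain ⟨n, hnN, hmn⟩ := hNinf.exists_gt m
    refine ⟨b n, ?_, hbA n, ?_⟩
    · rw [Metric.mem_closedBall, dist_zero_right]
      have h1 : (M₀.map (fun z : ℤ => (z : ℝ))).mulVec p + b n ∈ Metric.closedBall 0 R := by
        rw [← hnN]; exact hKnR n (hsub n p hpX)
      rw [Metric.mem_closedBall, dist_zero_right] at h1
      calc ‖b n‖ = ‖((M₀.map (fun z : ℤ => (z : ℝ))).mulVec p + b n)
            - (M₀.map (fun z : ℤ => (z : ℝ))).mulVec p‖ := by rw [add_sub_cancel_left]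
        _ ≤ ‖(M₀.map (fun z : ℤ => (z : ℝ))).mulVec p + b n‖
            + ‖(M₀.map (fun z : ℤ => (z : ℝ))).mulVec p‖ := norm_sub_le _ _
        _ ≤ R + ‖(M₀.map (fun z : ℤ => (z : ℝ))).mulVec p‖ := by linarith
    · intro x hx
      have := hsub n x hx
      rw [hnN] at this
      exact hKnmono hmn.le this
  have hinter := IsCompact.nonempty_iInter_of_sequence_nonempty_isCompact_isClosed s hsmono hsne
    ((isCompact_closedBall 0 R').of_isClosed_subset (hscl 0) Set.inter_subset_left) hscl
  obtain ⟨β, hβ⟩ := hinter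
  have hβA : ∀ i, β i ∈ A := (Set.mem_iInter.1 hβ 0).2.1
  have hβK : ∀ x ∈ X, (M₀.map (fun z : ℤ => (z : ℝ))).mulVec x + β ∈ K := by
    intro x hx
    apply iInter_dil_subset hKcmp.isClosed c
    rw [Set.mem_iInter]
    exact fun m => (Set.mem_iInter.1 hβ m).2.2 x hx
  exact hfree ⟨(fun x => (M₀.map (fun z : ℤ => (z : ℝ))).mulVec x + β) '' X,
    ⟨_, ⟨M₀, β, hdet₀, hβA, fun _ => rfl⟩, rfl⟩,
    by rintro _ ⟨x, hx, rfl⟩; exact hβK x hx⟩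

end FltAux

/-- A full-dimensional convex body whose lattice width equals the generalised flatness
constant `Flt_d^A(X)` contains an `A`-unimodular copy of `X`. -/
theorem width_eq_flt_containsCopy (d : ℕ) (A : Set ℝ) (hA : A = ZSet ∨ A = Set.univ)
    (K X : Set (Fin d → ℝ))
    (hK : IsConvexBody K) (hKfull : affineSpan ℝ K = ⊤)
    (hX : IsConvexBody X) (hXfull : affineSpan ℝ X = ⊤)
    (hw : latticeWidth K = Flt d A X) :
    ContainsCopy A X K := by
  by_contra hcon
  rcases Nat.eq_zero_or_pos d with hd0 | hd
  · subst hd0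
    apply hcon
    obtain ⟨k, hk⟩ := hK.2.2
    refine ⟨X, ⟨id, ⟨1, 0, Or.inl Matrix.det_one, ?_, ?_⟩, (Set.image_id X).symm⟩, ?_⟩
    · intro i; exact i.elim0
    · intro x; funext i; exact i.elim0
    · intro x hx
      have : x = k := Subsingleton.elim x k
      rwa [this]
  · have hAcl : IsClosed A := by
      rcases hA with rfl | rfl
      · exact Int.isClosedEmbedding_coe_real.isClosed_range
      · exact isClosed_univ
    obtain ⟨cpt, hcpt⟩ := hK.2.2
    have hpos := FltAux.latticeWidth_pos hd hK.1 hK.2.1 hKfull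
    obtain ⟨t, ht, htfree⟩ := FltAux.exists_free_dil A hAcl hK.1 hK.2.1 hX.1 hXfull hcpt hcon
    set K' := FltAux.dil cpt t '' K with hK'def
    have hK'body : IsConvexBody K' := by
      obtain ⟨h1, h2, h3⟩ := FltAux.dil_image_convexBody hK.1 hK.2.1 hK.2.2 cpt t
      exact ⟨h1, h2, h3⟩
    have hlw' : latticeWidth K' = t * latticeWidth K :=
      FltAux.latticeWidth_dil cpt (by linarith) K
    by_cases hbdd : BddAbove {w | ∃ K'' : Set (Fin d → ℝ),
      IsConvexBody K'' ∧ ¬ ContainsCopy A X K'' ∧ w = latticeWidth K''}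
    · have hmem : latticeWidth K' ∈ {w | ∃ K'' : Set (Fin d → ℝ),
          IsConvexBody K'' ∧ ¬ ContainsCopy A X K'' ∧ w = latticeWidth K''} :=
        ⟨K', hK'body, htfree, rfl⟩
      have hle : latticeWidth K' ≤ Flt d A X := le_csSup hbdd hmem
      rw [hlw', ← hw] at hle
      nlinarith
    · have h0 : Flt d A X = 0 := Real.sSup_of_not_bddAbove hbdd
      rw [h0] at hw
      linarith
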